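/- arXiv:2001.06337 — 3 statements merged into one kernel-verified Lean document; each statement's English description precedes it below -/
import Mathlib

section
/- The matrix A = [[0, 1/L, -1/L], [-1/C_H, -α, 0], [1/C_L, 0, -1/(R_L C_L)]] with L, C_H, C_L, R_L, α > 0 is Hurwitz, i.e., all its eigenvalues have strictly negative real part. -/
/-- The dynamics matrix of the converter with u ≡ 1 is Hurwitz:
every complex eigenvalue has strictly negative real part. -/
theorem stmt_2 (L CH CL RL α : ℝ)
    (hL : 0 < L) (hCH : 0 < CH) (hCL : 0 < CL) (hRL : 0 < RL) (hα : 0 < α) :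
    ∀ μ : ℂ,
      (Matrix.charpoly
        ((!![0, 1/L, -(1/L); -(1/CH), -α, 0; 1/CL, 0, -(1/(RL*CL))] :
          Matrix (Fin 3) (Fin 3) ℝ).map (algebraMap ℝ ℂ))).IsRoot μ →
      μ.re < 0 := by
  intro μ hroot
  set M := ((!![0, 1/L, -(1/L); -(1/CH), -α, 0; 1/CL, 0, -(1/(RL*CL))] :
          Matrix (Fin 3) (Fin 3) ℝ).map (algebraMap ℝ ℂ)) with hM
  have key : M.charpoly.eval μ = (μ • (1:Matrix (Fin 3) (Fin 3) ℂ) - M).det := by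
    rw [Matrix.charpoly, ← Polynomial.coe_evalRingHom, RingHom.map_det]
    congr 1
    ext i j
    by_cases h : i = j <;>
    simp [Matrix.charmatrix_apply, Matrix.one_apply, h]
  have h0 : (μ • (1:Matrix (Fin 3) (Fin 3) ℂ) - M).det = 0 := by
    rw [← key]; exact hroot
  rw [Matrix.det_fin_three] at h0
  simp [hM, Matrix.map_apply, Matrix.one_apply] at h0
  have hL0 : (L:ℂ) ≠ 0 := Complex.ofReal_ne_zero.mpr hL.ne'
  have hCH0 : (CH:ℂ) ≠ 0 := Complex.ofReal_ne_zero.mpr hCH.ne'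
  have hCL0 : (CL:ℂ) ≠ 0 := Complex.ofReal_ne_zero.mpr hCL.ne'
  have hRL0 : (RL:ℂ) ≠ 0 := Complex.ofReal_ne_zero.mpr hRL.ne'
  set K : ℝ := L * CH * CL * RL with hK
  set P : ℝ := K * α + L * CH with hP
  set Q : ℝ := L * CH * α + CL * RL + CH * RL with hQ
  set R : ℝ := 1 + CH * RL * α with hR
  field_simp at h0
  have h1 : (K:ℂ) * μ^3 + (P:ℂ) * μ^2 + (Q:ℂ) * μ + (R:ℂ) = 0 := by
    have h1' : ((L:ℂ) * CL^2 * RL) *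
        ((K:ℂ) * μ^3 + (P:ℂ) * μ^2 + (Q:ℂ) * μ + (R:ℂ)) = 0 := by
      push_cast [hK, hP, hQ, hR]
      linear_combination ((L:ℂ) * CL^2 * RL) * h0
    have hne : ((L:ℂ) * CL^2 * RL) ≠ 0 := by
      apply mul_ne_zero (mul_ne_zero hL0 (pow_ne_zero _ hCL0)) hRL0
    exact (mul_eq_zero.mp h1').resolve_left hne
  have hKpos : 0 < K := by positivity
  have hPpos : 0 < P := by positivity
  have hQpos : 0 < Q := by positivity
  have hRpos : 0 < R := by positivity
  have hRH : R * K < P * Q := by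
    have hdiff : P*Q - R*K
        = K*L*CH*α^2 + K*CL*RL*α + L^2*CH^2*α + L*CH^2*RL := by
      rw [hP, hQ, hR, hK]; ring
    nlinarith [mul_pos (mul_pos (mul_pos hKpos hL) hCH) (mul_pos hα hα),
      mul_pos (mul_pos (mul_pos hKpos hCL) hRL) hα,
      mul_pos (mul_pos (mul_pos (mul_pos hL hL) hCH) hCH) hα,
      mul_pos (mul_pos (mul_pos hL hCH) hCH) hRL]
  by_contra hx
  push_neg at hx
  set x := μ.re with hxdef
  set y := μ.im with hydef
  rw [show μ = (x:ℂ) + (y:ℂ) * Complex.I from (Complex.re_add_im μ).symm] at h1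
  rw [Complex.ext_iff] at h1
  simp only [Complex.add_re, Complex.add_im, Complex.mul_re, Complex.mul_im,
    Complex.ofReal_re, Complex.ofReal_im, Complex.I_re, Complex.I_im,
    Complex.zero_re, Complex.zero_im, Complex.one_re, Complex.one_im,
    pow_succ, pow_zero, one_mul, mul_zero, zero_mul, mul_one, sub_zero, zero_sub,
    add_zero, zero_add] at h1
  obtain ⟨hre, him⟩ := h1
  have hre' : K*x^3 - 3*K*x*y^2 + P*x^2 - P*y^2 + Q*x + R = 0 := by
    linear_combination hre
  have him' : y * (3*K*x^2 - K*y^2 + 2*P*x + Q) = 0 := by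
    linear_combination him
  rcases eq_or_ne y 0 with hy | hy
  · rw [hy] at hre'
    have t1 : 0 ≤ K * x^3 := mul_nonneg hKpos.le (pow_nonneg hx 3)
    have t2 : 0 ≤ P * x^2 := mul_nonneg hPpos.le (sq_nonneg x)
    have t3 : 0 ≤ Q * x := mul_nonneg hQpos.le hx
    nlinarith [t1, t2, t3]
  · have hE : K*y^2 - 3*K*x^2 - 2*P*x - Q = 0 := by
      have := (mul_eq_zero.mp him').resolve_left hy
      linarith
    have hid : R*K - P*Q = 8*K^2*x^3 + 8*P*K*x^2 + 2*(Q*K+P^2)*x := by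
      linear_combination K*hre' + (3*K*x+P)*hE
    have t1 : 0 ≤ 8*K^2*x^3 :=
      mul_nonneg (by positivity) (pow_nonneg hx 3)
    have t2 : 0 ≤ 8*P*K*x^2 :=
      mul_nonneg (by positivity) (sq_nonneg x)
    have t3 : 0 ≤ 2*(Q*K+P^2)*x :=
      mul_nonneg (by positivity) hx
    linarith [hid, hRH, t1, t2, t3]
end

section
/- Let V(z) = (L x2*²/2) z1² + (1/2) z2² (L(z1 + k*)² + C_H) + (C_L/2) z3². Along trajectories of the reduced sliding dynamics ż1 = -γ1[z1(z2 + x2*) + k* z2], ż2 = (1/(L(z1+k*)² + C_H))·[-L(z1+k*)(z2+x2*) ż1 - α C_H z2 - z3(z1+k*) - x3* z1], ż3 = -(1/(R_L C_L)) z3 - (1/(C_L γ1)) ż1, its derivative satisfies V̇(z) = -γ1 L x2*³ z1² - (α C_H - γ1 L k* x̄1) z2² - (1/R_L) z3² + γ1 L x2* z1 z2² (z1 + 2k*) + z1 (x2* z3 - x3* z2), where x̄1 = k* x2*. -/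
/-- Lyapunov derivative along the reduced sliding dynamics (adaptive
current control): V̇ equals the stated expression. -/
theorem stmt_7 (L CH CL RL α γ1 ks x2s x3s : ℝ)
    (hL : 0 < L) (hCH : 0 < CH) (hCL : 0 < CL) (hRL : 0 < RL)
    (hα : 0 < α) (hγ1 : 0 < γ1) (hx2s : 0 < x2s) (hx3s : 0 < x3s)
    (z1 z2 z3 : ℝ → ℝ)
    (h1 : ∀ t, HasDerivAt z1 (-γ1 * (z1 t * (z2 t + x2s) + ks * z2 t)) t)
    (h2 : ∀ t, HasDerivAt z2
      ((1 / (L * (z1 t + ks)^2 + CH)) *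
        (-L * (z1 t + ks) * (z2 t + x2s) * (-γ1 * (z1 t * (z2 t + x2s) + ks * z2 t))
          - α * CH * z2 t - z3 t * (z1 t + ks) - x3s * z1 t)) t)
    (h3 : ∀ t, HasDerivAt z3
      (-(1/(RL*CL)) * z3 t
        - (1/(CL*γ1)) * (-γ1 * (z1 t * (z2 t + x2s) + ks * z2 t))) t) :
    ∀ t, HasDerivAt
      (fun s => (L * x2s^2 / 2) * (z1 s)^2
        + (1/2) * (z2 s)^2 * (L * (z1 s + ks)^2 + CH)
        + (CL/2) * (z3 s)^2)
      (-(γ1 * L * x2s^3) * (z1 t)^2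
        - (α * CH - γ1 * L * ks * (ks * x2s)) * (z2 t)^2
        - (1/RL) * (z3 t)^2
        + γ1 * L * x2s * z1 t * (z2 t)^2 * (z1 t + 2*ks)
        + z1 t * (x2s * z3 t - x3s * z2 t)) t := by
  intro t
  have hden : L * (z1 t + ks)^2 + CH ≠ 0 := by positivity
  set d1 := -γ1 * (z1 t * (z2 t + x2s) + ks * z2 t) with hd1
  set d2 := (1 / (L * (z1 t + ks)^2 + CH)) *
        (-L * (z1 t + ks) * (z2 t + x2s) * d1
          - α * CH * z2 t - z3 t * (z1 t + ks) - x3s * z1 t) with hd2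
  set d3 := -(1/(RL*CL)) * z3 t - (1/(CL*γ1)) * d1 with hd3
  have H : HasDerivAt
      (fun s => (L * x2s^2 / 2) * (z1 s)^2
        + (1/2) * (z2 s)^2 * (L * (z1 s + ks)^2 + CH)
        + (CL/2) * (z3 s)^2)
      ((L * x2s^2 / 2) * (2 * z1 t * d1)
        + ((1/2) * (2 * z2 t * d2) * (L * (z1 t + ks)^2 + CH)
          + (1/2) * (z2 t)^2 * (L * (2 * (z1 t + ks) * d1)))
        + (CL/2) * (2 * z3 t * d3)) t := by
    have hz1 : HasDerivAt (fun s => (z1 s)^2) (2 * z1 t * d1) t := by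
      exact ((h1 t).fun_pow 2).congr_deriv (by rw [hd1]; ring)
    have hz2 : HasDerivAt (fun s => (z2 s)^2) (2 * z2 t * d2) t := by
      exact ((h2 t).fun_pow 2).congr_deriv (by rw [hd2]; ring)
    have hz3 : HasDerivAt (fun s => (z3 s)^2) (2 * z3 t * d3) t := by
      exact ((h3 t).fun_pow 2).congr_deriv (by rw [hd3, hd1]; ring)
    have hq : HasDerivAt (fun s => L * (z1 s + ks)^2 + CH)
        (L * (2 * (z1 t + ks) * d1)) t := by
      have : HasDerivAt (fun s => (z1 s + ks)^2) (2 * (z1 t + ks) * d1) t := by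
        exact (((h1 t).add_const ks).fun_pow 2).congr_deriv (by rw [hd1]; ring)
      simpa using (this.const_mul L).add_const CH
    exact ((hz1.const_mul (L * x2s^2 / 2)).add
      (((hz2.const_mul (1/2)).mul hq))).add (hz3.const_mul (CL/2))
  convert H using 1
  rw [hd2, hd3, hd1]
  have hγ : (γ1:ℝ) ≠ 0 := ne_of_gt hγ1
  have hC : (CL:ℝ) ≠ 0 := ne_of_gt hCL
  have hR : (RL:ℝ) ≠ 0 := ne_of_gt hRL
  field_simp
  ring
end

section
/- Suppose σ : [0, ∞) → ℝ is absolutely continuous, σ(0) > 0, and σ(t)σ̇(t) ≤ -ω|σ(t)| for almost all t with ω > 0, as long as σ(t) ≠ 0. Then σ reaches zero in finite time, and the reaching time satisfies t_reach ≤ σ(0)/ω. -/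
open MeasureTheory intervalIntegral

/-- Sliding-mode reaching time: if σ is absolutely continuous (encoded via the
fundamental theorem of calculus with an integrable derivative σ'), σ(0) > 0,
and σσ' ≤ -ω|σ| for a.e. t ≥ 0 as long as σ ≠ 0, then σ reaches zero within
time σ(0)/ω. -/
theorem stmt_13 (σ σ' : ℝ → ℝ) (ω : ℝ) (hω : 0 < ω) (h0 : 0 < σ 0)
    (hint : ∀ s t : ℝ, 0 ≤ s → s ≤ t → IntervalIntegrable σ' volume s t)
    (hFTC : ∀ s t : ℝ, 0 ≤ s → s ≤ t → σ t - σ s = ∫ u in s..t, σ' u)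
    (hineq : ∀ᵐ t ∂(volume.restrict (Set.Ici (0:ℝ))),
      σ t ≠ 0 → σ t * σ' t ≤ -ω * |σ t|) :
    ∃ T : ℝ, 0 ≤ T ∧ T ≤ σ 0 / ω ∧ σ T = 0 := by
  set T₀ : ℝ := σ 0 / ω with hT₀
  have hT₀pos : 0 < T₀ := div_pos h0 hω
  by_contra hcon
  push_neg at hcon
  -- no zero on [0, T₀]
  have hne : ∀ t ∈ Set.Icc (0:ℝ) T₀, σ t ≠ 0 := by
    intro t ht h
    exact (hcon t ht.1 ht.2) h
  -- continuity of σ on [0, T₀]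
  have hcont : ContinuousOn σ (Set.Icc 0 T₀) := by
    have h1 : IntegrableOn σ' (Set.uIcc 0 T₀) volume := by
      rw [Set.uIcc_of_le hT₀pos.le, integrableOn_Icc_iff_integrableOn_Ioc]
      exact (hint 0 T₀ le_rfl hT₀pos.le).1
    have h2 : ContinuousOn (fun x => σ 0 + ∫ u in (0:ℝ)..x, σ' u) (Set.uIcc 0 T₀) :=
      (continuousOn_const.add (intervalIntegral.continuousOn_primitive_interval h1))
    rw [Set.uIcc_of_le hT₀pos.le] at h2
    refine h2.congr fun x hx => ?_
    have hx' := hFTC 0 x le_rfl hx.1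
    linarith [hx']
  -- σ > 0 on [0, T₀]
  have hpos : ∀ t ∈ Set.Icc (0:ℝ) T₀, 0 < σ t := by
    intro t ht
    by_contra hle
    push_neg at hle
    have hsub : Set.Icc (0:ℝ) t ⊆ Set.Icc 0 T₀ := Set.Icc_subset_Icc le_rfl ht.2
    have := intermediate_value_Icc' ht.1 (hcont.mono hsub)
    have h0mem : (0:ℝ) ∈ Set.Icc (σ t) (σ 0) := ⟨hle, h0.le⟩
    obtain ⟨c, hc, hσc⟩ := this h0mem
    exact hne c (hsub hc) hσc
  -- derivative bound a.e. on [0, T₀]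
  have hae : σ' ≤ᵐ[volume.restrict (Set.Icc 0 T₀)] fun _ => -ω := by
    have h1 : ∀ᵐ t ∂(volume.restrict (Set.Icc (0:ℝ) T₀)),
        σ t ≠ 0 → σ t * σ' t ≤ -ω * |σ t| :=
      ae_restrict_of_ae_restrict_of_subset Set.Icc_subset_Ici_self hineq
    have h2 : ∀ᵐ t ∂(volume.restrict (Set.Icc (0:ℝ) T₀)), t ∈ Set.Icc (0:ℝ) T₀ :=
      ae_restrict_mem measurableSet_Icc
    filter_upwards [h1, h2] with t h1t h2t
    have hp := hpos t h2t
    have := h1t hp.ne'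
    rw [abs_of_pos hp] at this
    have : σ t * σ' t ≤ σ t * (-ω) := by linarith [this]
    exact le_of_mul_le_mul_left this hp
  -- integrate
  have hmono := intervalIntegral.integral_mono_ae_restrict hT₀pos.le
    (hint 0 T₀ le_rfl hT₀pos.le) (intervalIntegrable_const) hae
  have hFTC0 := hFTC 0 T₀ le_rfl hT₀pos.le
  rw [intervalIntegral.integral_const, smul_eq_mul] at hmono
  have hTend : σ T₀ ≤ 0 := by
    have : σ T₀ - σ 0 ≤ (T₀ - 0) * (-ω) := hFTC0 ▸ hmono
    have hT : T₀ * ω = σ 0 := by rw [hT₀]; exact div_mul_cancel₀ _ hω.ne'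
    nlinarith
  exact absurd hTend (not_le.2 (hpos T₀ ⟨hT₀pos.le, le_rfl⟩))
end
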